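/- Let N be a positive integer and let f : AddCircle (2π) → ℂ be the function induced by the 2π-periodic function g : ℝ → ℂ given on the fundamental domain [0, 2π) by g(θ) = (1 − cos(N·θ)) / (2·N) if 0 ≤ θ ≤ 2π/N and g(θ) = 0 if 2π/N < θ < 2π. Then the family n ↦ ‖fourierCoeff f n‖ · (1 + |n|^{3/2}), indexed by n ∈ ℤ, is summable; i.e. Σ_{n∈ℤ} |f̂_n|(1 + |n|^{3/2}) < ∞. -/

import Mathlib

open Real

open Set Complex MeasureTheory intervalIntegral in
private lemma exp_integral_norm_le (k : ℝ) (hk : k ≠ 0) (A : ℝ) :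
    ‖∫ x in (0:ℝ)..A, Complex.exp (Complex.I * k * x)‖ ≤ 2 / |k| := by
  have hc : (Complex.I * (k:ℂ)) ≠ 0 := by
    simp [Complex.I_ne_zero, Complex.ofReal_ne_zero, hk]
  have h1 : ∀ x : ℝ, Complex.I * (k:ℂ) * (x:ℂ) = ((k * x : ℝ) : ℂ) * Complex.I := by
    intro x; push_cast; ring
  have := integral_exp_mul_complex (a := 0) (b := A) hc
  rw [this]
  have habs : ∀ x : ℝ, ‖Complex.exp (Complex.I * (k:ℂ) * (x:ℂ))‖ = 1 := by
    intro x; rw [h1 x]; exact Complex.norm_exp_ofReal_mul_I _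
  have hnc : ‖Complex.I * (k:ℂ)‖ = |k| := by
    simp
  rw [norm_div, hnc]
  gcongr
  calc ‖Complex.exp (Complex.I * (k:ℂ) * (A:ℂ)) - Complex.exp (Complex.I * (k:ℂ) * ((0:ℝ):ℂ))‖
      ≤ ‖Complex.exp (Complex.I * (k:ℂ) * (A:ℂ))‖ + ‖Complex.exp (Complex.I * (k:ℂ) * ((0:ℝ):ℂ))‖ :=
        norm_sub_le _ _
    _ = 2 := by rw [habs, habs]; norm_num

private noncomputable def gg0 (N : ℕ) : ℝ → ℂ := fun θ =>
  if θ ≤ 2 * π / N then (((1 - Real.cos (N * θ)) / (2 * N) : ℝ) : ℂ) else 0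

private noncomputable def gg1 (N : ℕ) : ℝ → ℂ := fun θ =>
  if θ ≤ 2 * π / N then ((Real.sin (N * θ) / 2 : ℝ) : ℂ) else 0

private noncomputable def gg2 (N : ℕ) : ℝ → ℂ := fun θ =>
  if θ < 2 * π / N then (((N : ℝ) * Real.cos (N * θ) / 2 : ℝ) : ℂ) else 0

private lemma NA_eq (N : ℕ) (hN : 0 < N) : (N : ℝ) * (2 * π / N) = 2 * π := by
  field_simp

private lemma gg0_cont (N : ℕ) (hN : 0 < N) : Continuous (gg0 N) := by
  apply Continuous.if_le
  · exact Complex.continuous_ofReal.comp (by continuity)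
  · exact continuous_const
  · exact continuous_id
  · exact continuous_const
  · intro x hx
    rw [hx, NA_eq N hN, Real.cos_two_pi]
    norm_num

private lemma gg1_cont (N : ℕ) (hN : 0 < N) : Continuous (gg1 N) := by
  apply Continuous.if_le
  · exact Complex.continuous_ofReal.comp (by continuity)
  · exact continuous_const
  · exact continuous_id
  · exact continuous_const
  · intro x hx
    rw [hx, NA_eq N hN, Real.sin_two_pi]
    norm_num

private lemma real_deriv0 (N : ℕ) (hN : 0 < N) (x : ℝ) :
    HasDerivAt (fun θ : ℝ => (1 - Real.cos (N * θ)) / (2 * N)) (Real.sin (N * x) / 2) x := by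
  have hNR : (0:ℝ) < N := by exact_mod_cast hN
  have h1 : HasDerivAt (fun θ : ℝ => (N : ℝ) * θ) N x := by
    simpa using (hasDerivAt_id x).const_mul (N : ℝ)
  have h2 : HasDerivAt (fun θ : ℝ => Real.cos ((N : ℝ) * θ)) (-Real.sin (N * x) * N) x :=
    (Real.hasDerivAt_cos _).comp x h1
  have h3 := ((hasDerivAt_const x (1:ℝ)).sub h2).div_const (2 * N)
  refine h3.congr_deriv ?_
  field_simp
  ring

private lemma real_deriv1 (N : ℕ) (hN : 0 < N) (x : ℝ) :
    HasDerivAt (fun θ : ℝ => Real.sin (N * θ) / 2) ((N : ℝ) * Real.cos (N * x) / 2) x := by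
  have h1 : HasDerivAt (fun θ : ℝ => (N : ℝ) * θ) N x := by
    simpa using (hasDerivAt_id x).const_mul (N : ℝ)
  have h2 : HasDerivAt (fun θ : ℝ => Real.sin ((N : ℝ) * θ)) (Real.cos (N * x) * N) x :=
    (Real.hasDerivAt_sin _).comp x h1
  have h3 := h2.div_const 2
  refine h3.congr_deriv ?_
  ring

private lemma gg0_deriv (N : ℕ) (hN : 0 < N) (x : ℝ) :
    HasDerivWithinAt (gg0 N) (gg1 N x) (Set.Ioi x) x := by
  rcases lt_trichotomy x (2 * π / N) with hlt | heq | hgt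
  · have hev : gg0 N =ᶠ[nhds x] fun θ : ℝ => (((1 - Real.cos (N * θ)) / (2 * N) : ℝ) : ℂ) := by
      filter_upwards [Iio_mem_nhds hlt] with θ hθ
      simp [gg0, le_of_lt (Set.mem_Iio.mp hθ)]
    have hd : HasDerivAt (gg0 N) ((Real.sin (N * x) / 2 : ℝ) : ℂ) x :=
      ((real_deriv0 N hN x).ofReal_comp).congr_of_eventuallyEq hev
    have hval : gg1 N x = ((Real.sin (N * x) / 2 : ℝ) : ℂ) := by
      simp [gg1, hlt.le]
    rw [hval]
    exact hd.hasDerivWithinAt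
  · have hval : gg1 N x = 0 := by
      simp [gg1, heq, NA_eq N hN, Real.sin_two_pi]
    rw [hval]
    refine (hasDerivWithinAt_const x _ (0:ℂ)).congr ?_ ?_
    · intro y hy
      have : ¬ y ≤ 2 * π / N := by rw [← heq]; exact not_le.mpr hy
      simp [gg0, this]
    · simp [gg0, heq, NA_eq N hN, Real.cos_two_pi]
  · have hval : gg1 N x = 0 := by
      simp [gg1, not_le.mpr hgt]
    rw [hval]
    have hev : gg0 N =ᶠ[nhds x] fun _ : ℝ => (0:ℂ) := by
      filter_upwards [Ioi_mem_nhds hgt] with θ hθ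
      simp [gg0, not_le.mpr (Set.mem_Ioi.mp hθ)]
    exact ((hasDerivAt_const x (0:ℂ)).congr_of_eventuallyEq hev).hasDerivWithinAt

private lemma gg1_deriv (N : ℕ) (hN : 0 < N) (x : ℝ) :
    HasDerivWithinAt (gg1 N) (gg2 N x) (Set.Ioi x) x := by
  rcases lt_trichotomy x (2 * π / N) with hlt | heq | hgt
  · have hev : gg1 N =ᶠ[nhds x] fun θ : ℝ => ((Real.sin (N * θ) / 2 : ℝ) : ℂ) := by
      filter_upwards [Iio_mem_nhds hlt] with θ hθ
      simp [gg1, le_of_lt (Set.mem_Iio.mp hθ)]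
    have hd : HasDerivAt (gg1 N) (((N : ℝ) * Real.cos (N * x) / 2 : ℝ) : ℂ) x :=
      ((real_deriv1 N hN x).ofReal_comp).congr_of_eventuallyEq hev
    have hval : gg2 N x = (((N : ℝ) * Real.cos (N * x) / 2 : ℝ) : ℂ) := by
      simp [gg2, hlt]
    rw [hval]
    exact hd.hasDerivWithinAt
  · have hval : gg2 N x = 0 := by
      simp [gg2, heq]
    rw [hval]
    refine (hasDerivWithinAt_const x _ (0:ℂ)).congr ?_ ?_
    · intro y hy
      have : ¬ y ≤ 2 * π / N := by rw [← heq]; exact not_le.mpr hy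
      simp [gg1, this]
    · simp [gg1, heq, NA_eq N hN, Real.sin_two_pi]
  · have hval : gg2 N x = 0 := by
      have : ¬ x < 2 * π / N := not_lt.mpr hgt.le
      simp [gg2, this]
    rw [hval]
    have hev : gg1 N =ᶠ[nhds x] fun _ : ℝ => (0:ℂ) := by
      filter_upwards [Ioi_mem_nhds hgt] with θ hθ
      simp [gg1, not_le.mpr (Set.mem_Ioi.mp hθ)]
    exact ((hasDerivAt_const x (0:ℂ)).congr_of_eventuallyEq hev).hasDerivWithinAt

private lemma gg2_intInt (N : ℕ) (a b : ℝ) :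
    IntervalIntegrable (gg2 N) MeasureTheory.volume a b := by
  have hc : Continuous (fun θ : ℝ => (((N : ℝ) * Real.cos (N * θ) / 2 : ℝ) : ℂ)) :=
    Complex.continuous_ofReal.comp (by continuity)
  have heq : gg2 N = Set.indicator (Set.Iio (2 * π / N))
      (fun θ : ℝ => (((N : ℝ) * Real.cos (N * θ) / 2 : ℝ) : ℂ)) := by
    funext θ
    simp [gg2, Set.indicator_apply]
  rw [heq, intervalIntegrable_iff]
  exact (intervalIntegrable_iff.mp (hc.intervalIntegrable a b)).indicator measurableSet_Iio

private lemma gg0_zero (N : ℕ) (hN : 0 < N) : gg0 N 0 = 0 := by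
  unfold gg0
  rw [if_pos (by positivity)]
  norm_num

private lemma gg0_two_pi (N : ℕ) (hN : 0 < N) : gg0 N (0 + 2 * π) = 0 := by
  unfold gg0
  have h : (N : ℝ) * (0 + 2 * π) = N * (2 * π) := by ring
  split_ifs
  · rw [h, Real.cos_nat_mul_two_pi]
    norm_num
  · rfl

private lemma gg1_zero (N : ℕ) (hN : 0 < N) : gg1 N 0 = 0 := by
  unfold gg1
  rw [if_pos (by positivity)]
  norm_num

private lemma gg1_two_pi (N : ℕ) (hN : 0 < N) : gg1 N (0 + 2 * π) = 0 := by
  unfold gg1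
  have h : (N : ℝ) * (0 + 2 * π) = ((2 * N : ℕ) : ℝ) * π := by push_cast; ring
  split_ifs
  · rw [h, Real.sin_nat_mul_pi]
    norm_num
  · rfl

private lemma gg2_coeff_bound (N : ℕ) (hN : 0 < N) (n : ℤ) (hn : 2 * (N : ℝ) ≤ |(n : ℝ)|)
    (hab : (0 : ℝ) < 0 + 2 * π) :
    ‖fourierCoeffOn hab (gg2 N) n‖ ≤ N / (π * |(n : ℝ)|) := by
  have hπ : 0 < π := pi_pos
  have hNR : (0:ℝ) < N := by exact_mod_cast hN
  have hN1 : (1:ℝ) ≤ N := by exact_mod_cast hN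
  have hnpos : 0 < |(n:ℝ)| := by linarith
  have hA0 : 0 < 2 * π / (N:ℝ) := by positivity
  have hA2 : 2 * π / (N:ℝ) ≤ 0 + 2 * π := by
    rw [zero_add, div_le_iff₀ hNR]
    nlinarith
  set k₁ : ℝ := (N : ℝ) - n with hk1def
  set k₂ : ℝ := -(N : ℝ) - n with hk2def
  have habs1 : |(n:ℝ)| / 2 ≤ |k₁| := by
    have h := abs_sub_abs_le_abs_sub ((n:ℝ)) ((N:ℝ))
    rw [abs_of_nonneg (le_of_lt hNR)] at h
    rw [hk1def, abs_sub_comm]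
    linarith
  have habs2 : |(n:ℝ)| / 2 ≤ |k₂| := by
    have h := abs_sub_abs_le_abs_sub ((n:ℝ)) (-(N:ℝ))
    rw [abs_neg, abs_of_nonneg (le_of_lt hNR)] at h
    rw [hk2def, abs_sub_comm, sub_neg_eq_add]
    rw [sub_neg_eq_add] at h
    linarith
  have hk1 : k₁ ≠ 0 := by
    intro h; rw [h, abs_zero] at habs1; linarith
  have hk2 : k₂ ≠ 0 := by
    intro h; rw [h, abs_zero] at habs2; linarith
  have hfour : ∀ x : ℝ, (fourier (-n) (x : AddCircle (0 + 2 * π - 0)))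
      = Complex.exp (Complex.I * (((-n : ℤ) : ℝ) : ℂ) * x) := by
    intro x
    rw [fourier_coe_apply]
    have hπc : (π : ℂ) ≠ 0 := Complex.ofReal_ne_zero.mpr (ne_of_gt hπ)
    congr 1
    push_cast
    field_simp
    ring
  have hcont_four : Continuous fun x : ℝ => (fourier (-n) (x : AddCircle (0 + 2 * π - 0)) : ℂ) :=
    (map_continuous (fourier (-n))).comp (AddCircle.continuous_mk' _)
  have hFint : ∀ a b : ℝ, IntervalIntegrable
      (fun x : ℝ => (fourier (-n) (x : AddCircle (0 + 2 * π - 0)) : ℂ) • gg2 N x)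
      MeasureTheory.volume a b := by
    intro a b
    simp_rw [smul_eq_mul]
    exact (gg2_intInt N a b).continuousOn_mul hcont_four.continuousOn
  have hzero : (∫ x in (2 * π / (N:ℝ))..(0 + 2 * π),
      (fourier (-n) (x : AddCircle (0 + 2 * π - 0)) : ℂ) • gg2 N x) = 0 := by
    rw [intervalIntegral.integral_congr (g := fun _ => (0:ℂ))]
    · simp
    · intro x hx
      rw [Set.uIcc_of_le hA2] at hx
      have hxA : ¬ x < 2 * π / (N:ℝ) := not_lt.mpr hx.1
      simp [gg2, hxA]
  have hsplit : (∫ x in (0:ℝ)..(0 + 2 * π),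
      (fourier (-n) (x : AddCircle (0 + 2 * π - 0)) : ℂ) • gg2 N x)
      = ∫ x in (0:ℝ)..(2 * π / (N:ℝ)),
      (fourier (-n) (x : AddCircle (0 + 2 * π - 0)) : ℂ) • gg2 N x := by
    rw [← intervalIntegral.integral_add_adjacent_intervals (hFint 0 (2 * π / (N:ℝ)))
      (hFint (2 * π / (N:ℝ)) (0 + 2 * π)), hzero, add_zero]
  have hptwise : ∀ᵐ x : ℝ, x ∈ Set.uIoc 0 (2 * π / (N:ℝ)) →
      (fourier (-n) (x : AddCircle (0 + 2 * π - 0)) : ℂ) • gg2 N x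
      = (N:ℂ)/4 * (Complex.exp (Complex.I * (k₁:ℂ) * x) + Complex.exp (Complex.I * (k₂:ℂ) * x)) := by
    have hne : ∀ᵐ x : ℝ, x ≠ 2 * π / (N:ℝ) := by simp [MeasureTheory.ae_iff]
    filter_upwards [hne] with x hxne hx
    rw [Set.uIoc_of_le (le_of_lt hA0)] at hx
    have hxlt : x < 2 * π / (N:ℝ) := lt_of_le_of_ne hx.2 hxne
    rw [hfour x, smul_eq_mul]
    simp only [gg2, if_pos hxlt]
    simp only [Complex.ofReal_div, Complex.ofReal_mul, Complex.ofReal_cos,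
      Complex.ofReal_natCast, Complex.ofReal_ofNat]
    rw [Complex.cos]
    have e1 : Complex.exp (Complex.I * (((-n : ℤ) : ℝ) : ℂ) * x) *
        Complex.exp ((N:ℂ) * (x:ℂ) * Complex.I) = Complex.exp (Complex.I * (k₁:ℂ) * x) := by
      rw [← Complex.exp_add]; congr 1; rw [hk1def]; push_cast; ring
    have e2 : Complex.exp (Complex.I * (((-n : ℤ) : ℝ) : ℂ) * x) *
        Complex.exp (-((N:ℂ) * (x:ℂ)) * Complex.I) = Complex.exp (Complex.I * (k₂:ℂ) * x) := by
      rw [← Complex.exp_add]; congr 1; rw [hk2def]; push_cast; ring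
    calc Complex.exp (Complex.I * (((-n : ℤ) : ℝ) : ℂ) * x) *
          ((N:ℂ) * ((Complex.exp ((N:ℂ) * (x:ℂ) * Complex.I)
            + Complex.exp (-((N:ℂ) * (x:ℂ)) * Complex.I)) / 2) / 2)
        = (N:ℂ)/4 * (Complex.exp (Complex.I * (((-n : ℤ) : ℝ) : ℂ) * x) *
            Complex.exp ((N:ℂ) * (x:ℂ) * Complex.I)
          + Complex.exp (Complex.I * (((-n : ℤ) : ℝ) : ℂ) * x) *
            Complex.exp (-((N:ℂ) * (x:ℂ)) * Complex.I)) := by ring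
      _ = (N:ℂ)/4 * (Complex.exp (Complex.I * (k₁:ℂ) * x)
            + Complex.exp (Complex.I * (k₂:ℂ) * x)) := by rw [e1, e2]
  have hexpint : ∀ k : ℝ, IntervalIntegrable
      (fun x : ℝ => Complex.exp (Complex.I * (k:ℂ) * x)) MeasureTheory.volume 0 (2 * π / (N:ℝ)) := by
    intro k
    exact (Complex.continuous_exp.comp
      ((continuous_const.mul Complex.continuous_ofReal : Continuous fun x : ℝ =>
        Complex.I * (k:ℂ) * (x:ℂ)))).intervalIntegrable _ _
  have hInt : (∫ x in (0:ℝ)..(2 * π / (N:ℝ)),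
      (fourier (-n) (x : AddCircle (0 + 2 * π - 0)) : ℂ) • gg2 N x)
      = (N:ℂ)/4 * ((∫ x in (0:ℝ)..(2 * π / (N:ℝ)), Complex.exp (Complex.I * (k₁:ℂ) * x))
        + ∫ x in (0:ℝ)..(2 * π / (N:ℝ)), Complex.exp (Complex.I * (k₂:ℂ) * x)) := by
    rw [intervalIntegral.integral_congr_ae hptwise, intervalIntegral.integral_const_mul,
      intervalIntegral.integral_add (hexpint k₁) (hexpint k₂)]
  have hb1 := exp_integral_norm_le k₁ hk1 (2 * π / (N:ℝ))
  have hb2 := exp_integral_norm_le k₂ hk2 (2 * π / (N:ℝ))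
  have hdb1 : 2 / |k₁| ≤ 4 / |(n:ℝ)| := by
    rw [div_le_div_iff₀ (by linarith) hnpos]
    nlinarith
  have hdb2 : 2 / |k₂| ≤ 4 / |(n:ℝ)| := by
    rw [div_le_div_iff₀ (by linarith) hnpos]
    nlinarith
  have hnorm4 : ‖(N:ℂ)/4‖ = (N:ℝ)/4 := by
    rw [norm_div]
    simp [Complex.norm_natCast]
  rw [fourierCoeffOn_eq_integral, norm_smul, hsplit, hInt]
  have hbound : ‖(N:ℂ)/4 * ((∫ x in (0:ℝ)..(2 * π / (N:ℝ)), Complex.exp (Complex.I * (k₁:ℂ) * x))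
        + ∫ x in (0:ℝ)..(2 * π / (N:ℝ)), Complex.exp (Complex.I * (k₂:ℂ) * x))‖
      ≤ 2 * N / |(n:ℝ)| := by
    rw [norm_mul, hnorm4]
    calc (N:ℝ)/4 * ‖(∫ x in (0:ℝ)..(2 * π / (N:ℝ)), Complex.exp (Complex.I * (k₁:ℂ) * x))
          + ∫ x in (0:ℝ)..(2 * π / (N:ℝ)), Complex.exp (Complex.I * (k₂:ℂ) * x)‖
        ≤ (N:ℝ)/4 * (2 / |k₁| + 2 / |k₂|) := by
          apply mul_le_mul_of_nonneg_left _ (by positivity)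
          exact le_trans (norm_add_le _ _) (add_le_add hb1 hb2)
      _ ≤ (N:ℝ)/4 * (4 / |(n:ℝ)| + 4 / |(n:ℝ)|) := by
          apply mul_le_mul_of_nonneg_left (add_le_add hdb1 hdb2) (by positivity)
      _ = 2 * N / |(n:ℝ)| := by field_simp; ring
  calc ‖(1 / (0 + 2 * π - 0) : ℝ)‖ * ‖(N:ℂ)/4 * ((∫ x in (0:ℝ)..(2 * π / (N:ℝ)),
          Complex.exp (Complex.I * (k₁:ℂ) * x))
        + ∫ x in (0:ℝ)..(2 * π / (N:ℝ)), Complex.exp (Complex.I * (k₂:ℂ) * x))‖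
      ≤ ‖(1 / (0 + 2 * π - 0) : ℝ)‖ * (2 * N / |(n:ℝ)|) := by
        apply mul_le_mul_of_nonneg_left hbound (norm_nonneg _)
    _ = N / (π * |(n:ℝ)|) := by
        have hpos : (0:ℝ) < 1 / (0 + 2 * π - 0) := by
          have h2π : (0:ℝ) + 2 * π - 0 = 2 * π := by ring
          rw [h2π]; positivity
        rw [Real.norm_eq_abs, abs_of_pos hpos]
        have h2π : (0:ℝ) + 2 * π - 0 = 2 * π := by ring
        rw [h2π]
        field_simp

private lemma key_bound (N : ℕ) (hN : 0 < N) [Fact (0 < 2 * π)]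
    (g : ℝ → ℂ)
    (hg : ∀ θ : ℝ, g θ = if θ ≤ 2 * π / N
      then (((1 - Real.cos (N * θ)) / (2 * N) : ℝ) : ℂ) else 0)
    (f : AddCircle (2 * π) → ℂ)
    (hf : f = AddCircle.liftIco (2 * π) 0 g)
    (n : ℤ) (hn : 2 * (N : ℝ) ≤ |(n : ℝ)|) :
    ‖fourierCoeff f n‖ ≤ N / (π * |(n : ℝ)| ^ 3) := by
  have hπ : 0 < π := pi_pos
  have hNR : (0:ℝ) < N := by exact_mod_cast hN
  have hnpos : 0 < |(n : ℝ)| := by linarith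
  have hn0 : n ≠ 0 := by
    intro h
    rw [h] at hnpos
    simp at hnpos
  have hg' : g = gg0 N := funext fun θ => by rw [hg]; rfl
  rw [hf, hg', fourierCoeff_liftIco_eq,
    fourierCoeffOn_of_hasDeriv_right _ hn0 (gg0_cont N hN).continuousOn
      (fun x _ => gg0_deriv N hN x) ((gg1_cont N hN).intervalIntegrable _ _),
    fourierCoeffOn_of_hasDeriv_right _ hn0 (gg1_cont N hN).continuousOn
      (fun x _ => gg1_deriv N hN x) (gg2_intInt N _ _),
    gg0_two_pi N hN, gg0_zero N hN, gg1_two_pi N hN, gg1_zero N hN]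
  have hY := gg2_coeff_bound N hN n hn (lt_add_of_pos_right 0 Fact.out : (0:ℝ) < 0 + 2 * π)
  set Y := fourierCoeffOn (lt_add_of_pos_right 0 Fact.out : (0:ℝ) < 0 + 2 * π) (gg2 N) n with hYdef
  simp only [sub_self, mul_zero, zero_sub, mul_neg, neg_mul, neg_neg, norm_neg,
    Complex.ofReal_zero, sub_zero, Complex.ofReal_add, zero_add]
  rw [norm_mul, norm_mul, norm_mul, norm_mul]
  have hc : ‖(1:ℂ) / -(2 * ↑π * Complex.I * ↑n)‖ = 1 / (2 * π * |(n : ℝ)|) := by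
    rw [norm_div, norm_one, norm_neg]
    congr 1
    simp only [norm_mul, Complex.norm_I, Complex.norm_real, Real.norm_eq_abs,
      Complex.norm_intCast, Complex.norm_two]
    rw [abs_of_pos hπ]
    ring
  have hd : ‖((2 * π : ℝ) : ℂ)‖ = 2 * π := by
    rw [Complex.norm_real, Real.norm_eq_abs, abs_of_pos (by linarith)]
  rw [hc, hd]
  calc 1 / (2 * π * |(n:ℝ)|) * (2 * π * (1 / (2 * π * |(n:ℝ)|) * (2 * π * ‖Y‖)))
      = ‖Y‖ / |(n:ℝ)| ^ 2 := by
        field_simp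
    _ ≤ (N / (π * |(n:ℝ)|)) / |(n:ℝ)| ^ 2 := by gcongr
    _ = N / (π * |(n:ℝ)| ^ 3) := by
        field_simp

/-- The cut-off piece `g(θ) = (1 − cos(Nθ))/(2N)` on `[0, 2π/N]`, extended by `0` on the
rest of `[0, 2π)` and `2π`-periodically, has Fourier coefficients `f̂ₙ` with
`Σₙ |f̂ₙ|(1 + |n|^{3/2}) < ∞`. -/
theorem stmt_11 (N : ℕ) (hN : 0 < N) [Fact (0 < 2 * π)]
    (g : ℝ → ℂ)
    (hg : ∀ θ : ℝ, g θ = if θ ≤ 2 * π / N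
      then (((1 - Real.cos (N * θ)) / (2 * N) : ℝ) : ℂ) else 0)
    (f : AddCircle (2 * π) → ℂ)
    (hf : f = AddCircle.liftIco (2 * π) 0 g) :
    Summable (fun n : ℤ => ‖fourierCoeff f n‖ * (1 + |(n : ℝ)| ^ (3 / 2 : ℝ))) := by
  have hπ : 0 < π := pi_pos
  refine Summable.of_norm_bounded_eventually
    (g := fun n : ℤ => (2 * N / π) * |(n : ℝ)| ^ (-(3 / 2 : ℝ))) ?_ ?_
  · exact (Real.summable_abs_int_rpow (by norm_num)).mul_left _
  · rw [Filter.eventually_cofinite]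
    have hfin : {n : ℤ | ¬ (2 * (N : ℝ) ≤ |(n : ℝ)|)}.Finite := by
      apply Set.Finite.subset (Set.finite_Icc (-(2 * N) : ℤ) (2 * N))
      intro n hn
      simp only [Set.mem_setOf_eq, not_le] at hn
      have : |(n : ℝ)| ≤ (2 * N : ℤ) := by push_cast; linarith
      rw [abs_le] at this
      exact ⟨by exact_mod_cast this.1, by exact_mod_cast this.2⟩
    refine hfin.subset ?_
    intro n hn
    simp only [Set.mem_setOf_eq] at hn ⊢
    intro h2n
    apply hn
    set t : ℝ := |(n : ℝ)| with ht
    have ht1 : 1 ≤ t := by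
      have : (1:ℝ) ≤ 2 * N := by
        have : (1:ℝ) ≤ (N:ℝ) := by exact_mod_cast hN
        linarith
      linarith
    have ht0 : 0 < t := by linarith
    have h32 : 1 ≤ t ^ (3/2 : ℝ) := by
      have := Real.rpow_le_rpow_of_exponent_le ht1 (by norm_num : (0:ℝ) ≤ 3/2)
      rwa [Real.rpow_zero] at this
    have key := key_bound N hN g hg f hf n h2n
    rw [Real.norm_of_nonneg (mul_nonneg (norm_nonneg _) (by positivity))]
    have hneg : t ^ (-(3/2 : ℝ)) = t ^ (3/2 : ℝ) / t ^ (3:ℕ) := by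
      rw [← Real.rpow_natCast t 3, ← Real.rpow_sub ht0]
      norm_num
    calc ‖fourierCoeff f n‖ * (1 + t ^ (3/2 : ℝ))
        ≤ (N / (π * t ^ 3)) * (2 * t ^ (3/2 : ℝ)) := by
          apply mul_le_mul key (by linarith) (by positivity) (by positivity)
      _ = (2 * N / π) * (t ^ (3/2 : ℝ) / t ^ (3:ℕ)) := by
          field_simp
      _ = (2 * N / π) * t ^ (-(3/2 : ℝ)) := by rw [hneg]
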